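/- Let W ∈ ℝ^{m×n} have a directed spanning set of ℝ^n with respect to every x ∈ ℝ^n. Let σ ≥ 0 be such that for every x ∈ ℝ^n and every z ∈ ℝ^n, ‖W|_{S(x,W)} z‖₂ ≥ σ‖z‖₂ (i.e. σ is a lower bound on the smallest singular value of every restricted matrix W|_{S(x,W)}). Then for all x₀, x₁ ∈ ℝ^n: ‖ReLU(W x₀) − ReLU(W x₁)‖₂ ≥ (σ/√(2m))·‖x₀ − x₁‖₂. -/

import Mathlib

/-- Componentwise ReLU applied to a vector. -/
noncomputable def relu {m : ℕ} (y : Fin m → ℝ) : Fin m → ℝ := fun j => max (y j) 0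

/-- The restricted matrix `W|_{S(x,W)}`: the `j`-th row equals the `j`-th row of `W` when
`⟨w_j, x⟩ ≥ 0` and is the zero row otherwise. -/
noncomputable def restrDSS {m n : ℕ} (W : Matrix (Fin m) (Fin n) ℝ) (x : Fin n → ℝ) :
    Matrix (Fin m) (Fin n) ℝ :=
  fun j => if 0 ≤ dotProduct (W j) x then W j else 0

/-- Euclidean norm of a vector, written as the square root of the sum of squares. -/
noncomputable def enorm {ι : Type*} [Fintype ι] (v : ι → ℝ) : ℝ :=
  Real.sqrt (∑ i, v i ^ 2)

lemma relu_key (a b : ℝ) (h : 0 ≤ a + b) : (a - b) ^ 2 ≤ 4 * (max a 0 - max b 0) ^ 2 := by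
  rcases le_or_gt 0 a with ha | ha <;> rcases le_or_gt 0 b with hb | hb
  · rw [max_eq_left ha, max_eq_left hb]; nlinarith
  · rw [max_eq_left ha, max_eq_right hb.le]; nlinarith
  · rw [max_eq_right ha.le, max_eq_left hb]; nlinarith
  · nlinarith

/-- **Global inverse Lipschitz constant**: if `W` has a DSS with respect to every `x` and
`σ ≥ 0` is a lower bound on the smallest singular value of every restricted matrix
`W|_{S(x,W)}`, then `‖ReLU(Wx₀) − ReLU(Wx₁)‖₂ ≥ (σ/√(2m))·‖x₀ − x₁‖₂`. -/
theorem relu_layer_inverse_lipschitz {m n : ℕ} (W : Matrix (Fin m) (Fin n) ℝ)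
    (hDSS : ∀ x : Fin n → ℝ,
      Submodule.span ℝ
        {w : Fin n → ℝ | ∃ j, 0 ≤ dotProduct (W j) x ∧ W j = w} = ⊤)
    (σ : ℝ) (hσ : 0 ≤ σ)
    (hsv : ∀ x z : Fin n → ℝ, σ * _root_.enorm z ≤ _root_.enorm ((restrDSS W x).mulVec z)) :
    ∀ x₀ x₁ : Fin n → ℝ,
      σ / Real.sqrt (2 * m) * _root_.enorm (x₀ - x₁) ≤
        _root_.enorm (relu (W.mulVec x₀) - relu (W.mulVec x₁)) := by
  intro x₀ x₁
  have henorm_nonneg : ∀ (k : ℕ) (v : Fin k → ℝ), 0 ≤ _root_.enorm v := fun k v => Real.sqrt_nonneg _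
  rcases Nat.lt_or_ge m 2 with hm | hm
  · -- m = 0 or m = 1
    interval_cases m
    · -- m = 0
      have : Real.sqrt (2 * (0:ℕ)) = 0 := by norm_num
      rw [this, div_zero, zero_mul]
      exact henorm_nonneg _ _
    · -- m = 1
      rcases Nat.eq_zero_or_pos n with hn | hn
      · subst hn
        have : _root_.enorm (x₀ - x₁) = 0 := by
          simp [_root_.enorm]
        rw [this, mul_zero]
        exact henorm_nonneg _ _
      · -- contradiction from hDSS
        exfalso
        have h := hDSS (-(W 0))
        have hsub : {w : Fin n → ℝ | ∃ j, 0 ≤ dotProduct (W j) (-(W 0)) ∧ W j = w}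
            ⊆ {0} := by
          rintro w ⟨j, hj, rfl⟩
          have hj0 : j = 0 := Subsingleton.elim j 0
          subst hj0
          rw [dotProduct_neg] at hj
          have hdd : dotProduct (W 0) (W 0) ≤ 0 := by linarith
          have hz : ∀ i, W 0 i = 0 := by
            intro i
            have hsum : ∑ i, W 0 i * W 0 i ≤ 0 := hdd
            have hnn : ∀ i ∈ Finset.univ, (0:ℝ) ≤ W 0 i * W 0 i :=
              fun i _ => mul_self_nonneg _
            have := Finset.sum_nonneg hnn
            have heq : ∑ i, W 0 i * W 0 i = 0 := le_antisymm hsum this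
            have := (Finset.sum_eq_zero_iff_of_nonneg hnn).mp heq i (Finset.mem_univ i)
            exact mul_self_eq_zero.mp this
          have : W 0 = 0 := funext hz
          simp [this]
        have hle : Submodule.span ℝ {w : Fin n → ℝ | ∃ j, 0 ≤ dotProduct (W j) (-(W 0)) ∧ W j = w}
            ≤ Submodule.span ℝ ({0} : Set (Fin n → ℝ)) := Submodule.span_mono hsub
        rw [h, Submodule.span_zero_singleton] at hle
        have hiz : (Pi.single (⟨0, hn⟩ : Fin n) (1:ℝ) : Fin n → ℝ) = 0 := by
          have : Pi.single (⟨0, hn⟩ : Fin n) (1:ℝ) ∈ (⊥ : Submodule ℝ (Fin n → ℝ)) :=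
            hle Submodule.mem_top
          simpa using this
        have := congrFun hiz ⟨0, hn⟩
        simp at this
  · -- m ≥ 2
    set c := relu (W.mulVec x₀) - relu (W.mulVec x₁) with hc
    have hcomp : ∀ j, ((restrDSS W (x₀ + x₁)).mulVec (x₀ - x₁)) j ^ 2 ≤ 4 * (c j) ^ 2 := by
      intro j
      have hadd : dotProduct (W j) (x₀ + x₁)
          = dotProduct (W j) x₀ + dotProduct (W j) x₁ :=
        dotProduct_add _ _ _
      have hsubd : dotProduct (W j) (x₀ - x₁)
          = dotProduct (W j) x₀ - dotProduct (W j) x₁ :=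
        dotProduct_sub _ _ _
      simp only [hc, Matrix.mulVec, restrDSS, relu, Pi.sub_apply]
      split_ifs with hif
      · show dotProduct (W j) (x₀ - x₁) ^ 2 ≤
            4 * (max (dotProduct (W j) x₀) 0 - max (dotProduct (W j) x₁) 0) ^ 2
        rw [hsubd]
        exact relu_key _ _ (by rw [hadd] at hif; exact hif)
      · show dotProduct (0 : Fin n → ℝ) (x₀ - x₁) ^ 2 ≤
            4 * (max (dotProduct (W j) x₀) 0 - max (dotProduct (W j) x₁) 0) ^ 2
        rw [zero_dotProduct]
        norm_num
        positivity
    have hsum : ∑ j, ((restrDSS W (x₀ + x₁)).mulVec (x₀ - x₁)) j ^ 2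
        ≤ 4 * ∑ j, (c j) ^ 2 := by
      rw [Finset.mul_sum]
      exact Finset.sum_le_sum fun j _ => hcomp j
    have hkey : σ * _root_.enorm (x₀ - x₁) ≤ 2 * _root_.enorm c := by
      refine (hsv (x₀ + x₁) (x₀ - x₁)).trans ?_
      unfold _root_.enorm
      have h4 : Real.sqrt (4 * ∑ j, (c j) ^ 2) = 2 * Real.sqrt (∑ j, (c j) ^ 2) := by
        rw [show (4:ℝ) = 2 ^ 2 by norm_num, Real.sqrt_mul (by positivity),
          Real.sqrt_sq (by norm_num : (0:ℝ) ≤ 2)]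
      calc Real.sqrt (∑ j, ((restrDSS W (x₀ + x₁)).mulVec (x₀ - x₁)) j ^ 2)
          ≤ Real.sqrt (4 * ∑ j, (c j) ^ 2) := Real.sqrt_le_sqrt hsum
        _ = 2 * Real.sqrt (∑ j, (c j) ^ 2) := h4
    have hsqrt : (2:ℝ) ≤ Real.sqrt (2 * m) := by
      have h4m : (4:ℝ) ≤ 2 * m := by
        have : (2:ℝ) ≤ m := by exact_mod_cast hm
        linarith
      calc (2:ℝ) = Real.sqrt 4 := by
            rw [show (4:ℝ) = 2 ^ 2 by norm_num, Real.sqrt_sq (by norm_num : (0:ℝ) ≤ 2)]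
        _ ≤ Real.sqrt (2 * m) := Real.sqrt_le_sqrt h4m
    have hdiv : σ / Real.sqrt (2 * m) ≤ σ / 2 :=
      div_le_div_of_nonneg_left hσ (by norm_num) hsqrt |>.trans_eq rfl
    calc σ / Real.sqrt (2 * m) * _root_.enorm (x₀ - x₁)
        ≤ σ / 2 * _root_.enorm (x₀ - x₁) := by
          apply mul_le_mul_of_nonneg_right hdiv (henorm_nonneg _ _)
      _ ≤ _root_.enorm c := by linarith
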